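/- Let q be an odd prime power, v ≥ 1, n = 2^v, s odd, and t an integer with 1 ≤ ν_2(t) < v or ν_2(t)=0, satisfying qt ≡ t (mod 2^v) (i.e., v ≤ ν_2(q−1)+ν_2(t)), where ν_2 is the 2-adic valuation. Then there exists a μ_q-invariant subset P ⊆ Z/2^vZ with Z/2^vZ = P ⊔ ρ_{s,t}(P) if and only if ν_2(q^j − s) > ν_2(t) for all integers j ≥ 0. -/

import Mathlib

/-- The 2-adic valuation of an integer, valued in `ℕ∞` (so that `ν₂(0) = ⊤`). -/
noncomputable def nu2 (m : ℤ) : ℕ∞ := emultiplicity 2 m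

lemma nu2_lt_iff (e : ℕ) (x : ℤ) : (e : ℕ∞) < nu2 x ↔ (2:ℤ)^(e+1) ∣ x := by
  rw [nu2, pow_dvd_iff_le_emultiplicity, Nat.cast_add, Nat.cast_one,
    ENat.add_one_le_iff (ENat.coe_ne_top e)]

lemma odd_unit {w : ℕ} (m : ℤ) (hm : Odd m) : IsUnit ((m : ℤ) : ZMod (2^w)) := by
  have h1 : IsUnit ((m.natAbs : ℕ) : ZMod (2^w)) := by
    rw [ZMod.isUnit_iff_coprime]
    exact Nat.Coprime.pow_right _ (Odd.coprime_two_right (Int.natAbs_odd.mpr hm))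
  rcases Int.natAbs_eq m with h | h
  · rw [h, Int.cast_natCast]; exact h1
  · rw [h, Int.cast_neg, Int.cast_natCast]; exact (IsUnit.neg_iff _).mpr h1

lemma image_filter_bij {α : Type*} [Fintype α] [DecidableEq α] (g : α → α)
    (hg : Function.Bijective g) (p r : α → Prop) [DecidablePred p] [DecidablePred r]
    (h : ∀ i, r (g i) ↔ p i) :
    (Finset.univ.filter p).image g = Finset.univ.filter r := by
  ext a
  simp only [Finset.mem_image, Finset.mem_filter, Finset.mem_univ, true_and]
  constructor
  · rintro ⟨b, hb, rfl⟩; exact (h b).mpr hb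
  · intro ha
    obtain ⟨b, rfl⟩ := hg.surjective a
    exact ⟨b, (h b).mp ha, rfl⟩

lemma bit_flip (e : ℕ) (x : ZMod (2^(e+1))) :
    ((x + ((2^e : ℕ) : ZMod (2^(e+1)))).val < 2^e ↔ ¬ x.val < 2^e) := by
  haveI : NeZero (2^(e+1)) := ⟨pow_ne_zero _ two_ne_zero⟩
  have hE : (0:ℕ) < 2^e := pow_pos (by norm_num) e
  have h2E : (2:ℕ)^(e+1) = 2 * 2^e := by ring
  have hx : x.val < 2^(e+1) := ZMod.val_lt x
  have hv2 : (((2^e : ℕ) : ZMod (2^(e+1)))).val = 2^e :=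
    ZMod.val_natCast_of_lt (by rw [h2E]; omega)
  rw [ZMod.val_add, hv2]
  set a := x.val with ha
  rw [h2E] at hx ⊢
  rcases lt_or_ge a (2^e) with hc | hc
  · rw [Nat.mod_eq_of_lt (by omega)]; omega
  · have : (a + 2^e) % (2 * 2^e) = a - 2^e := by
      rw [Nat.mod_eq_sub_mod (by omega)]
      have h' : a + 2^e - 2 * 2^e = a - 2^e := by omega
      rw [h']; exact Nat.mod_eq_of_lt (by omega)
    rw [this]; omega

/-- for `q` an odd prime power, `n = 2^v` (`v ≥ 1`), `s` odd and `t` with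
`t ≢ 0 (mod 2^v)` and `q·t ≡ t (mod 2^v)`, a Type-I duadic splitting of `ℤ/2^vℤ` given by
`ρ_{s,t} : i ↦ s(i+t)` (i.e. a `μ_q`-invariant `P` with `ℤ/2^vℤ = P ⊔ ρ_{s,t}(P)`) exists
iff `ν₂(q^j − s) > ν₂(t)` for all `j ≥ 0`. -/
theorem stmt11 (q : ℕ) (hq : ∃ p k : ℕ, p.Prime ∧ 0 < k ∧ q = p ^ k) (hodd : Odd q)
    (v : ℕ) (hv : 1 ≤ v) (s t : ℤ) (hs : Odd s)
    (ht0 : ¬ ((2 : ℤ) ^ v ∣ t)) (hqt : (q : ℤ) * t ≡ t [ZMOD (2 ^ v : ℕ)]) :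
    (∃ P : Finset (ZMod (2 ^ v)),
        P.image (fun i => (q : ZMod (2 ^ v)) * i) = P ∧
        P.image (fun i => (s : ZMod (2 ^ v)) * (i + (t : ZMod (2 ^ v)))) = Pᶜ) ↔
    (∀ j : ℕ, nu2 ((q : ℤ) ^ j - s) > nu2 t) := by
  haveI : NeZero (2^v) := ⟨pow_ne_zero _ two_ne_zero⟩
  -- extract e and u with t = 2^e * u, u odd, e < v
  have ht : t ≠ 0 := fun h => ht0 (h ▸ dvd_zero _)
  have hfin : FiniteMultiplicity 2 t := Int.finiteMultiplicity_iff.mpr ⟨by norm_num, ht⟩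
  set e := multiplicity 2 t with he
  have he1 : (2:ℤ)^e ∣ t := pow_multiplicity_dvd 2 t
  have he2 : ¬ (2:ℤ)^(e+1) ∣ t := hfin.not_pow_dvd_of_multiplicity_lt (lt_add_one e)
  have hnut : nu2 t = (e : ℕ∞) := by rw [nu2]; exact hfin.emultiplicity_eq_multiplicity
  have hev : e < v := by
    by_contra hc
    exact ht0 (dvd_trans (pow_dvd_pow 2 (not_lt.mp hc)) he1)
  obtain ⟨u, hu⟩ := he1
  have huodd : Odd u := by
    rcases Int.even_or_odd u with he' | ho
    · obtain ⟨k, hk⟩ := he'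
      exact absurd ⟨k, by rw [hu, hk]; ring⟩ he2
    · exact ho
  have hRHS : (∀ j : ℕ, nu2 ((q : ℤ) ^ j - s) > nu2 t)
      ↔ ∀ j : ℕ, (2:ℤ)^(e+1) ∣ ((q:ℤ)^j - s) := by
    simp only [gt_iff_lt, hnut, nu2_lt_iff]
  rw [hRHS]
  -- units
  have hqU : IsUnit ((q:ℕ) : ZMod (2^v)) :=
    (ZMod.isUnit_iff_coprime q (2^v)).mpr (Nat.Coprime.pow_right _ (Odd.coprime_two_right hodd))
  have hsU : IsUnit ((s:ℤ) : ZMod (2^v)) := odd_unit s hs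
  have hqinj : Function.Injective (fun i : ZMod (2^v) => (q : ZMod (2^v)) * i) :=
    hqU.mul_right_injective
  have hrinj : Function.Injective
      (fun i : ZMod (2^v) => (s : ZMod (2^v)) * (i + (t : ZMod (2^v)))) := by
    intro a b hab
    simp only at hab
    have h1 := hsU.mul_right_injective hab
    exact add_right_cancel h1
  constructor
  · -- forward: contradiction if some j fails
    rintro ⟨P, hP1, hP2⟩ j
    by_contra hj'
    have hx0 : (q:ℤ)^j - s ≠ 0 := by
      intro h0
      exact hj' (h0 ▸ dvd_zero _)
    have hfx : FiniteMultiplicity 2 ((q:ℤ)^j - s) :=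
      Int.finiteMultiplicity_iff.mpr ⟨by norm_num, hx0⟩
    set d := multiplicity 2 ((q:ℤ)^j - s) with hd
    have hd1 : (2:ℤ)^d ∣ ((q:ℤ)^j - s) := pow_multiplicity_dvd 2 _
    have hd2 : ¬ (2:ℤ)^(d+1) ∣ ((q:ℤ)^j - s) := hfx.not_pow_dvd_of_multiplicity_lt (lt_add_one d)
    have hde : d ≤ e := by
      by_contra hc
      exact hj' (dvd_trans (pow_dvd_pow 2 (by omega)) hd1)
    obtain ⟨w, hw⟩ := hd1
    have hwodd : Odd w := by
      rcases Int.even_or_odd w with he' | ho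
      · obtain ⟨k, hk⟩ := he'
        exact absurd ⟨k, by rw [hw, hk]; ring⟩ hd2
      · exact ho
    obtain ⟨wu, hwu⟩ := odd_unit (w := v) w hwodd
    set i₀ : ZMod (2^v) :=
      (2 : ZMod (2^v))^(e-d) * (s : ZMod (2^v)) * (u : ZMod (2^v)) * ↑wu⁻¹ with hi₀
    -- key identity
    have hcast : ((q : ZMod (2^v))^j - (s : ZMod (2^v)))
        = (2 : ZMod (2^v))^d * (w : ZMod (2^v)) := by
      have := congrArg (fun z : ℤ => (z : ZMod (2^v))) hw
      push_cast at this
      exact this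
    have htcast : ((t:ℤ) : ZMod (2^v)) = (2 : ZMod (2^v))^e * (u : ZMod (2^v)) := by
      have := congrArg (fun z : ℤ => (z : ZMod (2^v))) hu
      push_cast at this
      exact this
    have hwinv : (w : ZMod (2^v)) * ↑wu⁻¹ = 1 := by
      rw [← hwu]; exact wu.mul_inv
    have hpow : (2 : ZMod (2^v))^d * (2 : ZMod (2^v))^(e-d) = (2 : ZMod (2^v))^e := by
      rw [← pow_add]; congr 1; omega
    have hkey : (q : ZMod (2^v))^j * i₀ = (s : ZMod (2^v)) * (i₀ + (t : ZMod (2^v))) := by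
      have hmain : ((q : ZMod (2^v))^j - (s : ZMod (2^v))) * i₀
          = (s : ZMod (2^v)) * ((t:ℤ) : ZMod (2^v)) := by
        rw [hcast, htcast, hi₀]
        calc (2 : ZMod (2^v))^d * w * (2^(e-d) * s * u * ↑wu⁻¹)
            = ((2 : ZMod (2^v))^d * 2^(e-d)) * s * u * ((w : ZMod (2^v)) * ↑wu⁻¹) := by ring
          _ = (2 : ZMod (2^v))^e * s * u * 1 := by rw [hpow, hwinv]
          _ = (s : ZMod (2^v)) * (2^e * u) := by ring
      linear_combination hmain
    -- closure of P and Pᶜ under multiplication by q^k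
    have hqP : ∀ x ∈ P, (q : ZMod (2^v)) * x ∈ P := by
      intro x hx
      have : (q : ZMod (2^v)) * x ∈ P.image (fun i => (q : ZMod (2^v)) * i) :=
        Finset.mem_image_of_mem _ hx
      rwa [hP1] at this
    have hqPc : ∀ x, x ∉ P → (q : ZMod (2^v)) * x ∉ P := by
      intro x hx hmem
      rw [← hP1] at hmem
      obtain ⟨y, hy, hxy⟩ := Finset.mem_image.mp hmem
      have : y = x := hqinj hxy
      exact hx (this ▸ hy)
    have hqPk : ∀ k : ℕ, ∀ x ∈ P, (q : ZMod (2^v))^k * x ∈ P := by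
      intro k
      induction k with
      | zero => intro x hx; simpa using hx
      | succ n ih =>
        intro x hx
        rw [pow_succ, mul_assoc]
        exact ih _ (hqP x hx)
    have hqPck : ∀ k : ℕ, ∀ x, x ∉ P → (q : ZMod (2^v))^k * x ∉ P := by
      intro k
      induction k with
      | zero => intro x hx; simpa using hx
      | succ n ih =>
        intro x hx
        rw [pow_succ, mul_assoc]
        exact ih _ (hqPc x hx)
    by_cases hiP : i₀ ∈ P
    · have h1 : (s : ZMod (2^v)) * (i₀ + (t : ZMod (2^v))) ∈ Pᶜ := by
        rw [← hP2]
        exact Finset.mem_image_of_mem _ hiP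
      rw [Finset.mem_compl] at h1
      exact h1 (hkey ▸ hqPk j i₀ hiP)
    · have h2 : (s : ZMod (2^v)) * (i₀ + (t : ZMod (2^v))) ∈ P := by
        by_contra hc
        have hmem : (s : ZMod (2^v)) * (i₀ + (t : ZMod (2^v))) ∈ Pᶜ := Finset.mem_compl.mpr hc
        rw [← hP2] at hmem
        obtain ⟨y, hy, hxy⟩ := Finset.mem_image.mp hmem
        have : y = i₀ := hrinj hxy
        exact hiP (this ▸ hy)
      exact (hqPck j i₀ hiP) (hkey ▸ h2)
  · -- reverse: construct P
    intro h
    have h0 : (2:ℤ)^(e+1) ∣ (1 - s) := by simpa using h 0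
    have h1 : (2:ℤ)^(e+1) ∣ ((q:ℤ) - s) := by simpa using h 1
    have hq1 : (2:ℤ)^(e+1) ∣ ((q:ℤ) - 1) := by
      have := dvd_sub h1 h0
      rwa [show (q:ℤ) - s - (1 - s) = (q:ℤ) - 1 by ring] at this
    have hs1 : (2:ℤ)^(e+1) ∣ (s - 1) := by
      have := dvd_neg.mpr h0
      rwa [show -(1 - s) = s - 1 by ring] at this
    have hMN : (2:ℕ)^(e+1) ∣ 2^v := pow_dvd_pow 2 (by omega)
    haveI : NeZero ((2:ℕ)^(e+1)) := ⟨pow_ne_zero _ two_ne_zero⟩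
    set c := ZMod.castHom hMN (ZMod (2^(e+1))) with hc
    have hqM : ((q:ℕ) : ZMod (2^(e+1))) = 1 := by
      have h' : (((q:ℤ) - 1 : ℤ) : ZMod (2^(e+1))) = 0 := by
        rw [ZMod.intCast_zmod_eq_zero_iff_dvd]
        exact_mod_cast hq1
      push_cast at h'
      linear_combination h'
    have hsM : ((s:ℤ) : ZMod (2^(e+1))) = 1 := by
      have h' : (((s:ℤ) - 1 : ℤ) : ZMod (2^(e+1))) = 0 := by
        rw [ZMod.intCast_zmod_eq_zero_iff_dvd]
        exact_mod_cast hs1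
      push_cast at h'
      linear_combination h'
    have htM : ((t:ℤ) : ZMod (2^(e+1))) = ((2^e : ℕ) : ZMod (2^(e+1))) := by
      have hdvd : (2:ℤ)^(e+1) ∣ (t - 2^e) := by
        obtain ⟨k, hk⟩ := huodd
        exact ⟨k, by rw [hu, hk]; ring⟩
      have h' : ((t - 2^e : ℤ) : ZMod (2^(e+1))) = 0 := by
        rw [ZMod.intCast_zmod_eq_zero_iff_dvd]
        exact_mod_cast hdvd
      push_cast at h' ⊢
      linear_combination h'
    -- the partition
    refine ⟨Finset.univ.filter (fun i : ZMod (2^v) => (c i).val < 2^e), ?_, ?_⟩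
    · -- q-invariance
      have hbij : Function.Bijective (fun i : ZMod (2^v) => (q : ZMod (2^v)) * i) :=
        Finite.injective_iff_bijective.mp hqinj
      apply image_filter_bij _ hbij
      intro i
      have : c ((q : ZMod (2^v)) * i) = c i := by
        rw [map_mul, map_natCast, hqM, one_mul]
      rw [this]
    · -- splitting
      have hbij : Function.Bijective
          (fun i : ZMod (2^v) => (s : ZMod (2^v)) * (i + (t : ZMod (2^v)))) :=
        Finite.injective_iff_bijective.mp hrinj
      rw [Finset.compl_filter]
      apply image_filter_bij _ hbij
      intro i
      have hci : c ((s : ZMod (2^v)) * (i + (t : ZMod (2^v))))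
          = c i + ((2^e : ℕ) : ZMod (2^(e+1))) := by
        rw [map_mul, map_intCast, hsM, one_mul, map_add, map_intCast, htM]
      rw [hci]
      exact (not_congr (bit_flip e (c i))).trans not_not
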